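/- The crossing number of the complete bipartite graph K_{m,n} is at most ⌊n/2⌋·⌊(n-1)/2⌋·⌊m/2⌋·⌊(m-1)/2⌋. -/

import Mathlib

open SimpleGraph

structure Drawing {V : Type*} (G : SimpleGraph V) where
  vert : V → ℝ × ℝ
  vert_inj : Function.Injective vert
  edge : Sym2 V → ℝ → ℝ × ℝ
  edge_cont : ∀ e ∈ G.edgeSet, ContinuousOn (edge e) (Set.Icc 0 1)
  edge_inj : ∀ e ∈ G.edgeSet, Set.InjOn (edge e) (Set.Icc 0 1)
  edge_ends : ∀ u v : V, s(u, v) ∈ G.edgeSet →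
    (edge s(u, v) 0 = vert u ∧ edge s(u, v) 1 = vert v) ∨
    (edge s(u, v) 0 = vert v ∧ edge s(u, v) 1 = vert u)
  edge_avoid : ∀ e ∈ G.edgeSet, ∀ t ∈ Set.Ioo (0 : ℝ) 1, ∀ w : V, edge e t ≠ vert w
  inter_finite : ∀ e ∈ G.edgeSet, ∀ f ∈ G.edgeSet, e ≠ f →
    {p : ℝ × ℝ | (∃ t ∈ Set.Ioo (0 : ℝ) 1, edge e t = p) ∧
      (∃ t ∈ Set.Ioo (0 : ℝ) 1, edge f t = p)}.Finite

noncomputable def Drawing.crossings {V : Type*} {G : SimpleGraph V} (D : Drawing G) : ℕ :=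
  Set.ncard {q : (Sym2 V × Sym2 V) × (ℝ × ℝ) |
    q.1.1 ∈ G.edgeSet ∧ q.1.2 ∈ G.edgeSet ∧ q.1.1 ≠ q.1.2 ∧
    (∃ t ∈ Set.Ioo (0 : ℝ) 1, D.edge q.1.1 t = q.2) ∧
    (∃ t ∈ Set.Ioo (0 : ℝ) 1, D.edge q.1.2 t = q.2)} / 2

noncomputable def crossingNumber {V : Type*} (G : SimpleGraph V) : ℕ :=
  sInf {n : ℕ | ∃ D : Drawing G, D.crossings = n}

namespace Zar

/-! ### coordinates -/

noncomputable def zc (m k : ℕ) : ℝ :=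
  if k < (m+1)/2 then (k : ℝ) + 1 else -(((k - (m+1)/2 : ℕ) : ℝ) + 1)

lemma zc_pos {m k : ℕ} (h : k < (m+1)/2) : 0 < zc m k := by
  rw [zc, if_pos h]; positivity

lemma zc_neg {m k : ℕ} (h : ¬ k < (m+1)/2) : zc m k < 0 := by
  rw [zc, if_neg h]
  have : (0:ℝ) ≤ ((k - (m+1)/2 : ℕ) : ℝ) := Nat.cast_nonneg _
  linarith

lemma zc_ne (m k : ℕ) : zc m k ≠ 0 := by
  by_cases h : k < (m+1)/2
  · exact (zc_pos h).ne'
  · exact (zc_neg h).ne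

lemma zc_inj (m : ℕ) : Function.Injective (zc m) := by
  intro k k' h
  by_cases h1 : k < (m+1)/2 <;> by_cases h2 : k' < (m+1)/2
  · rw [zc, if_pos h1, zc, if_pos h2] at h
    exact_mod_cast add_right_cancel h
  · exact absurd (h ▸ zc_pos h1) (not_lt.mpr (zc_neg h2).le)
  · exact absurd (h ▸ zc_neg h1) (not_lt.mpr (zc_pos h2).le)
  · rw [zc, if_neg h1, zc, if_neg h2, neg_inj] at h
    have : (k - (m+1)/2 : ℕ) = (k' - (m+1)/2 : ℕ) := by exact_mod_cast add_right_cancel h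
    omega

/-! ### the drawing -/

noncomputable def zvert (m n : ℕ) : Fin m ⊕ Fin n → ℝ × ℝ :=
  Sum.elim (fun i => (zc m i, 0)) (fun j => (0, zc n j))

noncomputable def zedge (m n : ℕ) (e : Sym2 (Fin m ⊕ Fin n)) (t : ℝ) : ℝ × ℝ :=
  (1 - t) • zvert m n e.out.1 + t • zvert m n e.out.2

lemma out_cases {α : Type*} (u v : α) :
    (s(u,v) : Sym2 α).out = (u,v) ∨ (s(u,v) : Sym2 α).out = (v,u) := by
  have h : Sym2.mk (s(u,v) : Sym2 α).out.1 (s(u,v) : Sym2 α).out.2 = s(u,v) := (s(u,v) : Sym2 α).out_eq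
  have h2 : s(((s(u,v) : Sym2 α).out).1, ((s(u,v) : Sym2 α).out).2) = s(u,v) := by
    conv_rhs => rw [← h]
  rcases Sym2.eq_iff.mp h2 with ⟨h3, h4⟩ | ⟨h3, h4⟩
  · exact Or.inl (Prod.ext h3 h4)
  · exact Or.inr (Prod.ext h3 h4)

lemma edge_char {m n : ℕ} {e : Sym2 (Fin m ⊕ Fin n)}
    (he : e ∈ (completeBipartiteGraph (Fin m) (Fin n)).edgeSet) :
    ∃ i j, e = s(Sum.inl i, Sum.inr j) := by
  induction e using Sym2.ind with
  | _ u v =>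
    rw [SimpleGraph.mem_edgeSet] at he
    rcases u with i | j <;> rcases v with i' | j'
    · simp [completeBipartiteGraph] at he
    · exact ⟨i, j', rfl⟩
    · exact ⟨i', j, Sym2.eq_swap⟩
    · simp [completeBipartiteGraph] at he

lemma zedge_param {m n : ℕ} (i : Fin m) (j : Fin n) :
    (∀ t : ℝ, zedge m n s(Sum.inl i, Sum.inr j) t = ((1-t) * zc m i, t * zc n j)) ∨
    (∀ t : ℝ, zedge m n s(Sum.inl i, Sum.inr j) t = (t * zc m i, (1-t) * zc n j)) := by
  rcases out_cases (Sum.inl i : Fin m ⊕ Fin n) (Sum.inr j) with h | h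
  · left; intro t
    simp [zedge, h, zvert, Prod.ext_iff]
  · right; intro t
    simp [zedge, h, zvert, Prod.ext_iff]

lemma interior_param {m n : ℕ} {i : Fin m} {j : Fin n} {t : ℝ} (ht : t ∈ Set.Ioo (0:ℝ) 1) :
    ∃ c ∈ Set.Ioo (0:ℝ) 1,
      zedge m n s(Sum.inl i, Sum.inr j) t = (c * zc m i, (1-c) * zc n j) := by
  obtain ⟨ht0, ht1⟩ := ht
  rcases zedge_param i j with h | h
  · exact ⟨1 - t, ⟨by linarith, by linarith⟩, by rw [h t]; norm_num⟩
  · exact ⟨t, ⟨ht0, ht1⟩, by rw [h t]⟩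

lemma line_of_mem {m n : ℕ} {i : Fin m} {j : Fin n} {p : ℝ × ℝ}
    (h : ∃ t ∈ Set.Ioo (0:ℝ) 1, zedge m n s(Sum.inl i, Sum.inr j) t = p) :
    zc n j * p.1 + zc m i * p.2 = zc m i * zc n j ∧
      0 < zc m (i:ℕ) * p.1 ∧ 0 < zc n (j:ℕ) * p.2 := by
  obtain ⟨t, ht, hp⟩ := h
  obtain ⟨c, ⟨hc0, hc1⟩, hq⟩ := interior_param (i := i) (j := j) ht
  rw [hp] at hq
  rw [hq]
  dsimp only
  have ha := sq_pos_of_ne_zero (zc_ne m i)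
  have hb := sq_pos_of_ne_zero (zc_ne n j)
  refine ⟨by ring, ?_, ?_⟩
  · have : zc m (i:ℕ) * (c * zc m (i:ℕ)) = c * (zc m (i:ℕ))^2 := by ring
    rw [this]; positivity
  · have : zc n (j:ℕ) * ((1-c) * zc n (j:ℕ)) = (1-c) * (zc n (j:ℕ))^2 := by ring
    rw [this]
    have h1c : 0 < 1 - c := by linarith
    positivity

/-! ### algebraic core -/

lemma core {a b a' b' u v : ℝ}
    (e1 : b*u + a*v = a*b) (e2 : b'*u + a'*v = a'*b')
    (s1 : 0 < a*u) (s2 : 0 < b*v) (s3 : 0 < a'*u) (s4 : 0 < b'*v)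
    (hne : ¬ (a = a' ∧ b = b')) :
    0 < a*a' ∧ 0 < b*b' ∧ a ≠ a' ∧ b ≠ b' ∧ a*b*(a-a')*(b-b') < 0 := by
  have hu : u ≠ 0 := by rintro rfl; simp at s1
  have hv : v ≠ 0 := by rintro rfl; simp at s2
  have ha : a ≠ 0 := by rintro rfl; simp at s1
  have hb : b ≠ 0 := by rintro rfl; simp at s2
  have ha' : a' ≠ 0 := by rintro rfl; simp at s3
  have hb' : b' ≠ 0 := by rintro rfl; simp at s4
  have haa : 0 < a*a' := by nlinarith [mul_pos s1 s3, sq_pos_of_ne_zero hu]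
  have hbb : 0 < b*b' := by nlinarith [mul_pos s2 s4, sq_pos_of_ne_zero hv]
  have haneq : a ≠ a' := by
    rintro rfl
    have hbneq : b ≠ b' := fun hbb' => hne ⟨rfl, hbb'⟩
    have h1 : (b - b') * (u - a) = 0 := by linear_combination e1 - e2
    rcases mul_eq_zero.mp h1 with h | h
    · exact hbneq (by linarith)
    · have hua : u = a := by linarith
      have : a * v = 0 := by rw [hua] at e1; linarith
      rcases mul_eq_zero.mp this with h' | h'
      · exact ha h'
      · exact hv h'
  have hbneq : b ≠ b' := by
    rintro rfl
    have h1 : (a - a') * (v - b) = 0 := by linear_combination e1 - e2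
    rcases mul_eq_zero.mp h1 with h | h
    · exact haneq (by linarith)
    · have hvb : v = b := by linarith
      have : b * u = 0 := by rw [hvb] at e1; linarith
      rcases mul_eq_zero.mp this with h' | h'
      · exact hb h'
      · exact hu h'
  refine ⟨haa, hbb, haneq, hbneq, ?_⟩
  have iden : b*b'*(a'-a)*u + a*a'*(b'-b)*v = 0 := by
    linear_combination a'*b'*e1 - a*b*e2
  have hK : a*a'*(b'-b)*v ≠ 0 :=
    mul_ne_zero (mul_ne_zero (mul_ne_zero ha ha') (sub_ne_zero.mpr (Ne.symm hbneq))) hv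
  have hKsq : 0 < (a*a'*(b'-b)*v)^2 := sq_pos_of_ne_zero hK
  have ring_id : (a*b*(a-a')*(b-b')) * ((a'*u)*(b'*v)) =
      (b*b'*(a'-a)*u) * (a*a'*(b'-b)*v) := by ring
  have hbu : b*b'*(a'-a)*u = -(a*a'*(b'-b)*v) := by linarith
  rw [hbu] at ring_id
  have hP : 0 < (a'*u)*(b'*v) := mul_pos s3 s4
  nlinarith [ring_id, hKsq, hP]

lemma core_unique {a b a' b' : ℝ} (ha : a ≠ 0) (hb : b ≠ 0) (ha' : a' ≠ 0) (hb' : b' ≠ 0)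
    (hne : ¬ (a = a' ∧ b = b')) (p q : ℝ × ℝ)
    (hp1 : b*p.1 + a*p.2 = a*b) (hp2 : b'*p.1 + a'*p.2 = a'*b')
    (hq1 : b*q.1 + a*q.2 = a*b) (hq2 : b'*q.1 + a'*q.2 = a'*b') : p = q := by
  by_cases hdet : a'*b - a*b' = 0
  · exfalso
    have haneq : a ≠ a' := by
      rintro rfl
      have : a * (b - b') = 0 := by linarith
      rcases mul_eq_zero.mp this with h | h
      · exact ha h
      · exact hne ⟨rfl, by linarith⟩
    have hbneq : b ≠ b' := by
      rintro rfl
      have : b * (a' - a) = 0 := by linarith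
      rcases mul_eq_zero.mp this with h | h
      · exact hb h
      · exact haneq (by linarith)
    have key : (a'*b - a*b') * p.1 = a*a'*(b - b') := by
      linear_combination a'*hp1 - a*hp2
    rw [hdet, zero_mul] at key
    have := mul_ne_zero (mul_ne_zero ha ha') (sub_ne_zero.mpr hbneq)
    exact this key.symm
  · have sub1 : b*(p.1-q.1) + a*(p.2-q.2) = 0 := by linear_combination hp1 - hq1
    have sub2 : b'*(p.1-q.1) + a'*(p.2-q.2) = 0 := by linear_combination hp2 - hq2
    have hu : (a'*b - a*b') * (p.1-q.1) = 0 := by linear_combination a'*sub1 - a*sub2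
    have hv : (a'*b - a*b') * (p.2-q.2) = 0 := by linear_combination b*sub2 - b'*sub1
    have h1 : p.1 = q.1 := by
      have := (mul_eq_zero.mp hu).resolve_left hdet
      linarith
    have h2 : p.2 = q.2 := by
      have := (mul_eq_zero.mp hv).resolve_left hdet
      linarith
    exact Prod.ext h1 h2

end Zar

namespace Zar

/-! ### the drawing -/

@[simp] lemma zvert_inl {m n : ℕ} (i : Fin m) :
    zvert m n (Sum.inl i) = (zc m i, 0) := rfl
@[simp] lemma zvert_inr {m n : ℕ} (j : Fin n) :
    zvert m n (Sum.inr j) = (0, zc n j) := rfl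

noncomputable def zar (m n : ℕ) : Drawing (completeBipartiteGraph (Fin m) (Fin n)) where
  vert := zvert m n
  vert_inj := by
    intro u v h
    rcases u with i | j <;> rcases v with i' | j' <;>
      simp only [zvert_inl, zvert_inr, Prod.mk.injEq] at h
    · exact congrArg Sum.inl (Fin.ext (zc_inj m h.1))
    · exact absurd h.1 (zc_ne m i)
    · exact absurd h.1.symm (zc_ne m i')
    · exact congrArg Sum.inr (Fin.ext (zc_inj n h.2))
  edge := zedge m n
  edge_cont := by
    intro e he
    apply Continuous.continuousOn
    unfold zedge
    fun_prop
  edge_inj := by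
    intro e he
    obtain ⟨i, j, rfl⟩ := edge_char he
    rcases zedge_param i j with h | h <;> intro s hs t ht hst
    · rw [h s, h t, Prod.mk.injEq] at hst
      exact mul_right_cancel₀ (zc_ne n j) hst.2
    · rw [h s, h t, Prod.mk.injEq] at hst
      exact mul_right_cancel₀ (zc_ne m i) hst.1
  edge_ends := by
    intro u v huv
    rcases out_cases u v with h | h
    · left; constructor <;> simp [zedge, h]
    · right; constructor <;> simp [zedge, h]
  edge_avoid := by
    intro e he t ht w
    obtain ⟨i, j, rfl⟩ := edge_char he
    obtain ⟨c, ⟨hc0, hc1⟩, hp⟩ := interior_param ht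
    rw [hp]
    rcases w with i' | j' <;> intro h
    · exact mul_ne_zero (by linarith : (0:ℝ) < 1-c).ne' (zc_ne n j) (congrArg Prod.snd h)
    · exact mul_ne_zero hc0.ne' (zc_ne m i) (congrArg Prod.fst h)
  inter_finite := by
    intro e he f hf hef
    obtain ⟨i, j, rfl⟩ := edge_char he
    obtain ⟨i', j', rfl⟩ := edge_char hf
    apply Set.Subsingleton.finite
    intro p hp q hq
    obtain ⟨hp1, -, -⟩ := line_of_mem hp.1
    obtain ⟨hp2, -, -⟩ := line_of_mem hp.2
    obtain ⟨hq1, -, -⟩ := line_of_mem hq.1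
    obtain ⟨hq2, -, -⟩ := line_of_mem hq.2
    refine core_unique (zc_ne m i) (zc_ne n j) (zc_ne m i') (zc_ne n j') ?_ p q hp1 hp2 hq1 hq2
    rintro ⟨h1, h2⟩
    exact hef (by rw [Fin.ext (zc_inj m h1), Fin.ext (zc_inj n h2)])

@[simp] lemma zar_edge (m n : ℕ) : (zar m n).edge = zedge m n := rfl

/-! ### index extraction -/

noncomputable def eI {m n : ℕ} (e : Sym2 (Fin m ⊕ Fin n)) : ℕ :=
  Sum.elim Fin.val (fun _ => Sum.elim Fin.val (fun _ => 0) e.out.2) e.out.1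

noncomputable def eJ {m n : ℕ} (e : Sym2 (Fin m ⊕ Fin n)) : ℕ :=
  Sum.elim (fun _ => Sum.elim (fun _ => 0) Fin.val e.out.2) Fin.val e.out.1

lemma eI_eJ {m n : ℕ} (i : Fin m) (j : Fin n) :
    eI (s(Sum.inl i, Sum.inr j) : Sym2 (Fin m ⊕ Fin n)) = (i:ℕ) ∧
    eJ (s(Sum.inl i, Sum.inr j) : Sym2 (Fin m ⊕ Fin n)) = (j:ℕ) := by
  rcases out_cases (Sum.inl i : Fin m ⊕ Fin n) (Sum.inr j) with h | h <;>
    constructor <;> simp [eI, eJ, h]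

/-! ### counting -/

def Aneg (m : ℕ) : Set (ℕ × ℕ) :=
  {P | P.1 < m ∧ P.2 < m ∧ 0 < zc m P.1 * zc m P.2 ∧ zc m P.1 * (zc m P.1 - zc m P.2) < 0}

def Apos (m : ℕ) : Set (ℕ × ℕ) :=
  {P | P.1 < m ∧ P.2 < m ∧ 0 < zc m P.1 * zc m P.2 ∧ 0 < zc m P.1 * (zc m P.1 - zc m P.2)}

lemma Aneg_fin (m : ℕ) : (Aneg m).Finite :=
  Set.Finite.subset ((Set.finite_Iio m).prod (Set.finite_Iio m))
    (fun P hP => ⟨hP.1, hP.2.1⟩)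

lemma Apos_fin (m : ℕ) : (Apos m).Finite :=
  Set.Finite.subset ((Set.finite_Iio m).prod (Set.finite_Iio m))
    (fun P hP => ⟨hP.1, hP.2.1⟩)

lemma flip1 {s s' : ℝ} (h3 : 0 < s*s') (h4 : s*(s-s') < 0) : 0 < s'*(s'-s) := by
  have hs' : s' ≠ 0 := by rintro rfl; simp at h3
  have hs2 : 0 < s'^2 := sq_pos_of_ne_zero hs'
  have h5 : 0 < s*s' - s*s := by nlinarith
  have h6 : 0 < (s*s') * (s'*(s'-s)) := by nlinarith [mul_pos hs2 h5]
  nlinarith [h6, h3]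

lemma flip2 {s s' : ℝ} (h3 : 0 < s*s') (h4 : 0 < s*(s-s')) : s'*(s'-s) < 0 := by
  have hs' : s' ≠ 0 := by rintro rfl; simp at h3
  have hs2 : 0 < s'^2 := sq_pos_of_ne_zero hs'
  have h5 : s*s' - s*s < 0 := by nlinarith
  have h6 : (s*s') * (s'*(s'-s)) < 0 := by nlinarith [mul_pos hs2 (neg_pos.mpr h5)]
  nlinarith [h6, h3]

lemma swap_image (m : ℕ) : Prod.swap '' Aneg m = Apos m := by
  ext ⟨a, b⟩
  constructor
  · rintro ⟨⟨c, d⟩, ⟨h1, h2, h3, h4⟩, he⟩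
    obtain ⟨rfl, rfl⟩ : d = a ∧ c = b := by
      simpa [Prod.ext_iff, Prod.swap, and_comm] using he
    dsimp only at h1 h2 h3 h4 ⊢
    exact ⟨h2, h1, by nlinarith, flip1 h3 h4⟩
  · rintro ⟨h1, h2, h3, h4⟩
    dsimp only at h1 h2 h3 h4
    exact ⟨(b, a), ⟨h2, h1, by nlinarith, flip2 h3 h4⟩, rfl⟩

lemma same_side {m k k' : ℕ} (h3 : 0 < zc m k * zc m k') :
    (k < (m+1)/2 ↔ k' < (m+1)/2) := by
  constructor <;> intro h <;> by_contra h'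
  · nlinarith [zc_pos (m := m) h, zc_neg (m := m) h']
  · nlinarith [zc_neg (m := m) h', zc_pos (m := m) h]

lemma nat_key (m : ℕ) :
    (m+1)/2 * ((m+1)/2) - (m+1)/2 + ((m - (m+1)/2) * (m - (m+1)/2) - (m - (m+1)/2)) =
      2*((m/2)*((m-1)/2)) := by
  obtain ⟨k, rfl⟩ | ⟨k, rfl⟩ := Nat.even_or_odd m
  · have h1 : (k+k+1)/2 = k := by omega
    have h2 : k+k - k = k := by omega
    have h3 : (k+k)/2 = k := by omega
    have h4 : (k+k-1)/2 = k-1 := by omega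
    rw [h1, h2, h3, h4]
    cases k with
    | zero => rfl
    | succ l =>
      have h5 : (l+1)*(l+1) - (l+1) = (l+1)*l := Nat.sub_eq_of_eq_add (by ring)
      have h6 : l+1-1 = l := rfl
      rw [h5, h6]; ring
  · have h1 : (2*k+1+1)/2 = k+1 := by omega
    have h2 : 2*k+1 - (k+1) = k := by omega
    have h3 : (2*k+1)/2 = k := by omega
    have h4 : (2*k+1-1)/2 = k := by omega
    rw [h1, h2, h3, h4]
    have h5 : (k+1)*(k+1) - (k+1) = (k+1)*k := Nat.sub_eq_of_eq_add (by ring)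
    rw [h5]
    cases k with
    | zero => rfl
    | succ l =>
      have h6 : (l+1)*(l+1) - (l+1) = (l+1)*l := Nat.sub_eq_of_eq_add (by ring)
      rw [h6]; ring

lemma union_sub (m : ℕ) : Aneg m ∪ Apos m ⊆
    (↑((Finset.range ((m+1)/2)).offDiag) : Set (ℕ×ℕ)) ∪
      ↑((Finset.Ico ((m+1)/2) m).offDiag) := by
  have key : ∀ P : ℕ × ℕ, P.1 < m → P.2 < m → 0 < zc m P.1 * zc m P.2 →
      zc m P.1 * (zc m P.1 - zc m P.2) ≠ 0 →
      P ∈ (↑((Finset.range ((m+1)/2)).offDiag) : Set (ℕ×ℕ)) ∪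
        ↑((Finset.Ico ((m+1)/2) m).offDiag) := by
    intro P h1 h2 h3 h4
    have hne : P.1 ≠ P.2 := by
      rintro he
      rw [he] at h4
      simp at h4
    by_cases hc : P.1 < (m+1)/2
    · left
      simp only [Finset.coe_offDiag, Set.mem_offDiag, Finset.coe_range, Set.mem_Iio]
      exact ⟨hc, (same_side h3).mp hc, hne⟩
    · right
      simp only [Finset.coe_offDiag, Set.mem_offDiag, Finset.coe_Ico, Set.mem_Ico]
      exact ⟨⟨not_lt.mp hc, h1⟩, ⟨not_lt.mp (fun h => hc ((same_side h3).mpr h)), h2⟩, hne⟩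
  rintro P (⟨h1, h2, h3, h4⟩ | ⟨h1, h2, h3, h4⟩)
  · exact key P h1 h2 h3 h4.ne
  · exact key P h1 h2 h3 h4.ne'

lemma A_card (m : ℕ) :
    (Aneg m).ncard ≤ (m/2)*((m-1)/2) ∧ (Apos m).ncard ≤ (m/2)*((m-1)/2) := by
  have hcardeq : (Apos m).ncard = (Aneg m).ncard := by
    rw [← swap_image, Set.ncard_image_of_injective _ Prod.swap_injective]
  have hdisj : Disjoint (Aneg m) (Apos m) := by
    rw [Set.disjoint_left]
    rintro P ⟨-, -, -, h4⟩ ⟨-, -, -, h4'⟩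
    exact absurd h4' (not_lt.mpr h4.le)
  have hU : (Aneg m ∪ Apos m).ncard = (Aneg m).ncard + (Apos m).ncard :=
    Set.ncard_union_eq hdisj (Aneg_fin m) (Apos_fin m)
  have hle : (Aneg m ∪ Apos m).ncard ≤ 2 * ((m/2)*((m-1)/2)) := by
    calc (Aneg m ∪ Apos m).ncard
        ≤ ((↑((Finset.range ((m+1)/2)).offDiag) : Set (ℕ×ℕ)) ∪
            ↑((Finset.Ico ((m+1)/2) m).offDiag)).ncard := by
          refine Set.ncard_le_ncard (union_sub m) ?_
          exact (Finset.finite_toSet _).union (Finset.finite_toSet _)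
      _ ≤ ((Finset.range ((m+1)/2)).offDiag).card + ((Finset.Ico ((m+1)/2) m).offDiag).card := by
          have := Set.ncard_union_le
            (↑((Finset.range ((m+1)/2)).offDiag) : Set (ℕ×ℕ))
            (↑((Finset.Ico ((m+1)/2) m).offDiag))
          rwa [Set.ncard_coe_finset, Set.ncard_coe_finset] at this
      _ = 2 * ((m/2)*((m-1)/2)) := by
          rw [Finset.offDiag_card, Finset.offDiag_card, Finset.card_range, Nat.card_Ico]
          exact nat_key m
  omega

lemma ncard_prod_eq {α β : Type*} (s : Set α) (t : Set β) (hs : s.Finite) (ht : t.Finite) :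
    (s ×ˢ t).ncard = s.ncard * t.ncard := by
  have h1 : s ×ˢ t = ↑(hs.toFinset ×ˢ ht.toFinset) := by
    rw [Finset.coe_product, hs.coe_toFinset, ht.coe_toFinset]
  rw [h1, Set.ncard_coe_finset, Finset.card_product]
  congr 1 <;> rw [← Set.ncard_coe_finset, Set.Finite.coe_toFinset]

def T (m n : ℕ) : Set ((ℕ×ℕ)×(ℕ×ℕ)) :=
  {q | q.1.1 < m ∧ q.1.2 < m ∧ q.2.1 < n ∧ q.2.2 < n ∧
    0 < zc m q.1.1 * zc m q.1.2 ∧ 0 < zc n q.2.1 * zc n q.2.2 ∧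
    zc m q.1.1 * zc n q.2.1 * (zc m q.1.1 - zc m q.1.2) * (zc n q.2.1 - zc n q.2.2) < 0}

lemma T_sub (m n : ℕ) : T m n ⊆ (Aneg m ×ˢ Apos n) ∪ (Apos m ×ˢ Aneg n) := by
  rintro ⟨⟨k1, k2⟩, ⟨l1, l2⟩⟩ ⟨h1, h2, h3, h4, h5, h6, h7⟩
  dsimp only at h1 h2 h3 h4 h5 h6 h7
  have hre : zc m k1 * zc n l1 * (zc m k1 - zc m k2) * (zc n l1 - zc n l2) =
      (zc m k1 * (zc m k1 - zc m k2)) * (zc n l1 * (zc n l1 - zc n l2)) := by ring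
  rw [hre] at h7
  rcases mul_neg_iff.mp h7 with ⟨hp, hn⟩ | ⟨hn, hp⟩
  · exact Or.inr ⟨⟨h1, h2, h5, hp⟩, h3, h4, h6, hn⟩
  · exact Or.inl ⟨⟨h1, h2, h5, hn⟩, h3, h4, h6, hp⟩

lemma T_fin (m n : ℕ) : (T m n).Finite :=
  Set.Finite.subset (((Aneg_fin m).prod (Apos_fin n)).union ((Apos_fin m).prod (Aneg_fin n)))
    (T_sub m n)

lemma T_card (m n : ℕ) :
    (T m n).ncard ≤ 2 * (((m/2)*((m-1)/2)) * ((n/2)*((n-1)/2))) := by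
  calc (T m n).ncard
      ≤ ((Aneg m ×ˢ Apos n) ∪ (Apos m ×ˢ Aneg n)).ncard :=
        Set.ncard_le_ncard (T_sub m n)
          (((Aneg_fin m).prod (Apos_fin n)).union ((Apos_fin m).prod (Aneg_fin n)))
    _ ≤ (Aneg m ×ˢ Apos n).ncard + (Apos m ×ˢ Aneg n).ncard := Set.ncard_union_le _ _
    _ = (Aneg m).ncard * (Apos n).ncard + (Apos m).ncard * (Aneg n).ncard := by
        rw [ncard_prod_eq _ _ (Aneg_fin m) (Apos_fin n),
          ncard_prod_eq _ _ (Apos_fin m) (Aneg_fin n)]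
    _ ≤ ((m/2)*((m-1)/2)) * ((n/2)*((n-1)/2)) + ((m/2)*((m-1)/2)) * ((n/2)*((n-1)/2)) := by
        gcongr
        · exact (A_card m).1
        · exact (A_card n).2
        · exact (A_card m).2
        · exact (A_card n).1
    _ = 2 * (((m/2)*((m-1)/2)) * ((n/2)*((n-1)/2))) := by ring

end Zar

open Zar

/-- Zarankiewicz's upper bound for the crossing number of the complete
bipartite graph `K_{m,n}`. -/
theorem crossingNumber_completeBipartiteGraph_le (m n : ℕ) :
    crossingNumber (completeBipartiteGraph (Fin m) (Fin n)) ≤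
      (n / 2) * ((n - 1) / 2) * (m / 2) * ((m - 1) / 2) := by
  have hD : (zar m n).crossings ≤ (n / 2) * ((n - 1) / 2) * (m / 2) * ((m - 1) / 2) := by
    unfold Drawing.crossings
    refine le_trans (Nat.div_le_div_right (le_trans (Set.ncard_le_ncard_of_injOn
      (fun q => ((eI q.1.1, eI q.1.2), (eJ q.1.1, eJ q.1.2)))
      ?_ ?_ (T_fin m n)) (T_card m n))) (le_of_eq ?_)
    · rintro ⟨⟨e, f⟩, p⟩ ⟨he, hf, hef, hpe, hpf⟩
      obtain ⟨i, j, rfl⟩ := edge_char he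
      obtain ⟨i', j', rfl⟩ := edge_char hf
      rw [zar_edge] at hpe hpf
      obtain ⟨e1, sa, sb⟩ := line_of_mem hpe
      obtain ⟨e2, sa', sb'⟩ := line_of_mem hpf
      have hne : ¬ (zc m (i:ℕ) = zc m (i':ℕ) ∧ zc n (j:ℕ) = zc n (j':ℕ)) := by
        rintro ⟨h1, h2⟩
        exact hef (by rw [Fin.ext (zc_inj m h1), Fin.ext (zc_inj n h2)])
      obtain ⟨c1, c2, -, -, c5⟩ := core e1 e2 sa sb sa' sb' hne
      show _ ∈ T m n
      dsimp only [T, Set.mem_setOf_eq]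
      rw [(eI_eJ i j).1, (eI_eJ i j).2, (eI_eJ i' j').1, (eI_eJ i' j').2]
      exact ⟨i.isLt, i'.isLt, j.isLt, j'.isLt, c1, c2, c5⟩
    · rintro ⟨⟨e, f⟩, p⟩ ⟨he, hf, hef, hpe, hpf⟩
        ⟨⟨e', f'⟩, p'⟩ ⟨he', hf', hef', hpe', hpf'⟩ heq
      obtain ⟨i, j, rfl⟩ := edge_char he
      obtain ⟨i', j', rfl⟩ := edge_char hf
      obtain ⟨i2, j2, rfl⟩ := edge_char he'
      obtain ⟨i2', j2', rfl⟩ := edge_char hf'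
      dsimp only at heq
      rw [Prod.mk.injEq, Prod.mk.injEq, Prod.mk.injEq] at heq
      obtain ⟨⟨hI, hI'⟩, hJ, hJ'⟩ := heq
      rw [(eI_eJ i j).1, (eI_eJ i2 j2).1] at hI
      rw [(eI_eJ i' j').1, (eI_eJ i2' j2').1] at hI'
      rw [(eI_eJ i j).2, (eI_eJ i2 j2).2] at hJ
      rw [(eI_eJ i' j').2, (eI_eJ i2' j2').2] at hJ'
      obtain rfl : i2 = i := Fin.ext hI.symm
      obtain rfl : i2' = i' := Fin.ext hI'.symm
      obtain rfl : j2 = j := Fin.ext hJ.symm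
      obtain rfl : j2' = j' := Fin.ext hJ'.symm
      rw [zar_edge] at hpe hpf hpe' hpf'
      obtain ⟨p1, -, -⟩ := line_of_mem hpe
      obtain ⟨p2, -, -⟩ := line_of_mem hpf
      obtain ⟨q1, -, -⟩ := line_of_mem hpe'
      obtain ⟨q2, -, -⟩ := line_of_mem hpf'
      have hne : ¬ (zc m (i2:ℕ) = zc m (i2':ℕ) ∧ zc n (j2:ℕ) = zc n (j2':ℕ)) := by
        rintro ⟨h1, h2⟩
        exact hef (by rw [Fin.ext (zc_inj m h1), Fin.ext (zc_inj n h2)])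
      have hpp : p = p' :=
        core_unique (zc_ne m i2) (zc_ne n j2) (zc_ne m i2') (zc_ne n j2')
          hne p p' p1 p2 q1 q2
      rw [hpp]
    · rw [Nat.mul_div_cancel_left _ (by norm_num : 0 < 2)]
      ring
  exact le_trans (Nat.sInf_le ⟨zar m n, rfl⟩) hD
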